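/- Assume H1 and H2, and let m(z) = 2∫_z^∞ e^{γ(y)}∫_y^∞ e^{-γ(ξ)}dξ dy. Then lim_{z→∞} (4∫_z^∞ e^{γ(y)} ∫_y^∞ m(ξ) e^{-γ(ξ)} dξ dy) / m(z)² = 1; consequently, defining m₂(z) = 2m(z)² - 4∫_z^∞ e^{γ(y)}∫_y^∞ m(ξ)e^{-γ(ξ)}dξ dy, one has m₂(z)/m(z)² → 1 as z → ∞. -/

import Mathlib

open MeasureTheory Real Filter

private lemma tail_split (f : ℝ → ℝ) (hc : Continuous f)
    (hint : ∀ a : ℝ, IntegrableOn f (Set.Ioi a)) (x : ℝ) :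
    (∫ t in Set.Ioi x, f t) = (∫ t in Set.Ioi (0:ℝ), f t) - ∫ t in (0:ℝ)..x, f t := by
  rcases le_total 0 x with hx | hx
  · have h1 : (∫ t in Set.Ioi (0:ℝ), f t)
        = (∫ t in Set.Ioc (0:ℝ) x, f t) + ∫ t in Set.Ioi x, f t := by
      rw [← MeasureTheory.setIntegral_union (Set.Ioc_disjoint_Ioi le_rfl) measurableSet_Ioi
        ((hint 0).mono_set Set.Ioc_subset_Ioi_self) (hint x), Set.Ioc_union_Ioi_eq_Ioi hx]
    rw [intervalIntegral.integral_of_le hx, h1]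
    ring
  · have h1 : (∫ t in Set.Ioi x, f t)
        = (∫ t in Set.Ioc x (0:ℝ), f t) + ∫ t in Set.Ioi (0:ℝ), f t := by
      rw [← MeasureTheory.setIntegral_union (Set.Ioc_disjoint_Ioi le_rfl) measurableSet_Ioi
        ((hint x).mono_set Set.Ioc_subset_Ioi_self) (hint 0), Set.Ioc_union_Ioi_eq_Ioi hx]
    rw [h1, intervalIntegral.integral_symm, intervalIntegral.integral_of_le hx]
    ring

private lemma tail_hasDerivAt (f : ℝ → ℝ) (hc : Continuous f)
    (hint : ∀ a : ℝ, IntegrableOn f (Set.Ioi a)) (y : ℝ) :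
    HasDerivAt (fun x => ∫ t in Set.Ioi x, f t) (-f y) y := by
  have h1 : HasDerivAt (fun u => ∫ t in (0:ℝ)..u, f t) (f y) y :=
    intervalIntegral.integral_hasDerivAt_right (hc.intervalIntegrable _ _)
      (hc.stronglyMeasurableAtFilter _ _) hc.continuousAt
  have h2 := (hasDerivAt_const y (∫ t in Set.Ioi (0:ℝ), f t)).sub h1
  have h3 : (fun x => ∫ t in Set.Ioi x, f t)
      = fun x => (∫ t in Set.Ioi (0:ℝ), f t) - ∫ t in (0:ℝ)..x, f t :=
    funext (tail_split f hc hint)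
  rw [h3]
  simpa [Pi.sub_def] using h2

private lemma tail_tendsto (f : ℝ → ℝ) (hc : Continuous f)
    (hint : ∀ a : ℝ, IntegrableOn f (Set.Ioi a)) :
    Tendsto (fun x => ∫ t in Set.Ioi x, f t) atTop (nhds 0) := by
  have h1 := MeasureTheory.intervalIntegral_tendsto_integral_Ioi 0 (hint 0) tendsto_id
  have h2 := (tendsto_const_nhds (x := ∫ t in Set.Ioi (0:ℝ), f t) (f := atTop)).sub h1
  rw [funext (tail_split f hc hint)]
  simpa using h2

private lemma tail_pos (f : ℝ → ℝ) (hc : Continuous f) (hpos : ∀ x, 0 < f x)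
    (hint : ∀ a : ℝ, IntegrableOn f (Set.Ioi a)) (z : ℝ) :
    0 < ∫ t in Set.Ioi z, f t := by
  have h1 : 0 < ∫ t in z..(z+1), f t :=
    intervalIntegral.intervalIntegral_pos_of_pos_on (hc.intervalIntegrable _ _)
      (fun x _ => hpos x) (by linarith)
  have h2 : (∫ t in z..(z+1), f t) ≤ ∫ t in Set.Ioi z, f t := by
    rw [intervalIntegral.integral_of_le (by linarith : z ≤ z + 1)]
    exact setIntegral_mono_set (hint z) (ae_of_all _ fun x => (hpos x).le)
      (HasSubset.Subset.eventuallyLE Set.Ioc_subset_Ioi_self)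
  linarith

private lemma tail_anti (f : ℝ → ℝ) (hnn : ∀ x, 0 ≤ f x)
    (hint : ∀ a : ℝ, IntegrableOn f (Set.Ioi a)) :
    Antitone (fun x => ∫ t in Set.Ioi x, f t) := fun a b hab =>
  setIntegral_mono_set (hint a) (ae_of_all _ fun x => hnn x)
    (HasSubset.Subset.eventuallyLE (Set.Ioi_subset_Ioi hab))

set_option maxHeartbeats 1000000 in
/-- Under H1 and H2, with m(z) = 2∫_z^∞ e^{γ(y)}∫_y^∞ e^{-γ(ξ)}dξ dy:
(4∫_z^∞ e^{γ(y)}∫_y^∞ m(ξ)e^{-γ(ξ)}dξ dy)/m(z)² → 1, and hence with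
m₂(z) = 2m(z)² - 4∫_z^∞ e^{γ(y)}∫_y^∞ m(ξ)e^{-γ(ξ)}dξ dy, m₂(z)/m(z)² → 1. -/
theorem second_moment_ratio_tendsto_one
    (q γ m : ℝ → ℝ)
    (hq : ContDiff ℝ 1 q)
    (hγ : ∀ y, γ y = 2 * ∫ t in (0:ℝ)..y, q t)
    (hm : ∀ z, m z =
        2 * ∫ y in Set.Ioi z, Real.exp (γ y) * ∫ ξ in Set.Ioi y, Real.exp (-(γ ξ)))
    (H1 : ∫⁻ y in Set.Ioi (0:ℝ),
        ENNReal.ofReal (Real.exp (γ y)) *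
          ∫⁻ z in Set.Ioi y, ENNReal.ofReal (Real.exp (-(γ z))) < ⊤)
    (H2a : Tendsto q atTop atTop)
    (H2b : Tendsto (fun x => deriv q x / q x ^ 2) atTop (nhds 0)) :
    Tendsto
      (fun z =>
        (4 * ∫ y in Set.Ioi z,
            Real.exp (γ y) * ∫ ξ in Set.Ioi y, m ξ * Real.exp (-(γ ξ))) / m z ^ 2)
      atTop (nhds 1) ∧
    Tendsto
      (fun z =>
        (2 * m z ^ 2 -
            4 * ∫ y in Set.Ioi z,
              Real.exp (γ y) * ∫ ξ in Set.Ioi y, m ξ * Real.exp (-(γ ξ))) / m z ^ 2)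
      atTop (nhds 1) := by
  have hqc : Continuous q := hq.continuous
  have hqd : ∀ z, HasDerivAt q (deriv q z) z := fun z =>
    ((hq.differentiable one_ne_zero) z).hasDerivAt
  -- derivative of γ
  have hγd : ∀ y, HasDerivAt γ (2 * q y) y := by
    intro y
    have h1 : HasDerivAt (fun u => ∫ t in (0:ℝ)..u, q t) (q y) y :=
      intervalIntegral.integral_hasDerivAt_right (hqc.intervalIntegrable _ _)
        (hqc.stronglyMeasurableAtFilter _ _) hqc.continuousAt
    have h2 := h1.const_mul (2:ℝ)
    have h3 : γ = fun u => 2 * ∫ t in (0:ℝ)..u, q t := funext hγ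
    rw [h3]
    exact h2
  have hγc : Continuous γ := Differentiable.continuous fun y => (hγd y).differentiableAt
  -- a linear lower bound for γ eventually
  obtain ⟨T, hT⟩ := eventually_atTop.mp (H2a.eventually_ge_atTop 1)
  have hlin : ∀ y, T ≤ y → γ T + 2 * (y - T) ≤ γ y := by
    intro y hy
    have hmono : (y - T : ℝ) ≤ ∫ t in T..y, q t := by
      have h0 := intervalIntegral.integral_mono_on (μ := volume) hy
        (intervalIntegrable_const (c := (1:ℝ))) (hqc.intervalIntegrable _ _)
        (fun x hx => hT x hx.1)
      simpa using h0
    have hdiff : γ y - γ T = 2 * ∫ t in T..y, q t := by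
      rw [hγ y, hγ T, ← mul_sub,
        intervalIntegral.integral_interval_sub_left (hqc.intervalIntegrable _ _)
          (hqc.intervalIntegrable _ _)]
    linarith
  have hγtop : Tendsto γ atTop atTop := by
    have hlb : Tendsto (fun y : ℝ => γ T + 2 * (y - T)) atTop atTop := by
      apply tendsto_atTop_add_const_left
      apply Tendsto.const_mul_atTop two_pos
      apply tendsto_atTop_add_const_right atTop (-T) tendsto_id |>.congr
      intro x; simp [sub_eq_add_neg]
    exact tendsto_atTop_mono' atTop
      (by filter_upwards [eventually_ge_atTop T] with y hy using hlin y hy) hlb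
  -- integrability of exp(-γ) on all tails
  have hexpc : Continuous fun t => Real.exp (-(γ t)) := Real.continuous_exp.comp hγc.neg
  have hexp_int : ∀ a : ℝ, IntegrableOn (fun t => Real.exp (-(γ t))) (Set.Ioi a) := by
    have hbase : IntegrableOn (fun t => Real.exp (-(γ t))) (Set.Ioi T) := by
      have hb : IntegrableOn (fun t : ℝ => Real.exp (2*T - γ T) * Real.exp (-2 * t))
          (Set.Ioi T) := (exp_neg_integrableOn_Ioi T two_pos).const_mul _
      refine Integrable.mono' hb hexpc.aestronglyMeasurable ?_
      refine (ae_restrict_iff' measurableSet_Ioi).mpr (ae_of_all _ fun y hy => ?_)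
      rw [Real.norm_eq_abs, abs_of_pos (Real.exp_pos _), ← Real.exp_add]
      apply Real.exp_le_exp.mpr
      have := hlin y (le_of_lt hy)
      linarith
    intro a
    rcases le_total T a with h | h
    · exact hbase.mono_set (Set.Ioi_subset_Ioi h)
    · rw [← Set.Ioc_union_Ioi_eq_Ioi h]
      exact (hexpc.integrableOn_Ioc).union hbase
  -- the function G
  set G : ℝ → ℝ := fun y => ∫ t in Set.Ioi y, Real.exp (-(γ t)) with hGdef
  have hGd : ∀ y, HasDerivAt G (-(Real.exp (-(γ y)))) y := by
    intro y; rw [hGdef]; exact tail_hasDerivAt _ hexpc hexp_int y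
  have hGc : Continuous G := Differentiable.continuous fun y => (hGd y).differentiableAt
  have hGpos : ∀ y, 0 < G y := by
    intro y; rw [hGdef]; exact tail_pos _ hexpc (fun x => Real.exp_pos _) hexp_int y
  have hG0 : Tendsto G atTop (nhds 0) := by
    rw [hGdef]; exact tail_tendsto _ hexpc hexp_int
  -- the function h = e^γ G
  set hfun : ℝ → ℝ := fun y => Real.exp (γ y) * G y with hhdef
  have hhc : Continuous hfun := (Real.continuous_exp.comp hγc).mul hGc
  have hhpos : ∀ y, 0 < hfun y := fun y => mul_pos (Real.exp_pos _) (hGpos y)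
  have hH1' : (∫⁻ y in Set.Ioi (0:ℝ), ENNReal.ofReal (hfun y)) < ⊤ := by
    have heq : ∀ y : ℝ, ENNReal.ofReal (Real.exp (γ y)) *
        (∫⁻ z in Set.Ioi y, ENNReal.ofReal (Real.exp (-(γ z))))
        = ENNReal.ofReal (hfun y) := by
      intro y
      rw [← MeasureTheory.ofReal_integral_eq_lintegral_ofReal (hexp_int y)
        (ae_of_all _ fun t => (Real.exp_pos _).le),
        ← ENNReal.ofReal_mul (Real.exp_pos _).le]
    rw [← MeasureTheory.lintegral_congr heq]
    exact H1
  have hh_int : ∀ a : ℝ, IntegrableOn hfun (Set.Ioi a) := by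
    have hh0 : IntegrableOn hfun (Set.Ioi (0:ℝ)) := by
      refine ⟨hhc.aestronglyMeasurable, ?_⟩
      rw [hasFiniteIntegral_iff_ofReal (ae_of_all _ fun y => (hhpos y).le)]
      exact hH1'
    intro a
    rcases le_total 0 a with h | h
    · exact hh0.mono_set (Set.Ioi_subset_Ioi h)
    · rw [← Set.Ioc_union_Ioi_eq_Ioi h]
      exact (hhc.integrableOn_Ioc).union hh0
  -- facts about m
  have hm' : ∀ z, m z = 2 * ∫ y in Set.Ioi z, hfun y := hm
  have hmd : ∀ z, HasDerivAt m (-(2 * hfun z)) z := by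
    intro z
    have h1 := (tail_hasDerivAt hfun hhc hh_int z).const_mul (2:ℝ)
    have h2 : m = fun z => 2 * ∫ y in Set.Ioi z, hfun y := funext hm'
    rw [h2]
    simpa [mul_comm] using h1
  have hmpos : ∀ z, 0 < m z := by
    intro z
    rw [hm' z]
    have := tail_pos hfun hhc hhpos hh_int z
    linarith
  have hmc : Continuous m := Differentiable.continuous fun z => (hmd z).differentiableAt
  have hm0 : Tendsto m atTop (nhds 0) := by
    have h1 := (tail_tendsto hfun hhc hh_int).const_mul (2:ℝ)
    have h2 : m = fun z => 2 * ∫ y in Set.Ioi z, hfun y := funext hm'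
    rw [h2]
    simpa using h1
  have hmanti : Antitone m := by
    intro a b hab
    rw [hm' a, hm' b]
    have := tail_anti hfun (fun x => (hhpos x).le) hh_int hab
    simpa using by linarith [this]
  -- the function F
  set F : ℝ → ℝ := fun y => ∫ ξ in Set.Ioi y, m ξ * Real.exp (-(γ ξ)) with hFdef
  have hFic : Continuous fun ξ => m ξ * Real.exp (-(γ ξ)) := hmc.mul hexpc
  have hF_int : ∀ a : ℝ, IntegrableOn (fun ξ => m ξ * Real.exp (-(γ ξ))) (Set.Ioi a) := by
    intro a
    refine Integrable.mono' ((hexp_int a).const_mul (m a)) hFic.aestronglyMeasurable ?_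
    refine (ae_restrict_iff' measurableSet_Ioi).mpr (ae_of_all _ fun ξ hξ => ?_)
    rw [Real.norm_eq_abs, abs_of_pos (mul_pos (hmpos ξ) (Real.exp_pos _))]
    exact mul_le_mul_of_nonneg_right (hmanti (le_of_lt hξ)) (Real.exp_pos _).le
  have hFd : ∀ y, HasDerivAt F (-(m y * Real.exp (-(γ y)))) y := by
    intro y; rw [hFdef]; exact tail_hasDerivAt _ hFic hF_int y
  have hFc : Continuous F := Differentiable.continuous fun y => (hFd y).differentiableAt
  have hFpos : ∀ y, 0 < F y := by
    intro y; rw [hFdef]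
    exact tail_pos _ hFic (fun x => mul_pos (hmpos x) (Real.exp_pos _)) hF_int y
  have hF0 : Tendsto F atTop (nhds 0) := by
    rw [hFdef]; exact tail_tendsto _ hFic hF_int
  have hFle : ∀ y, F y ≤ m y * G y := by
    intro y
    rw [hFdef, hGdef, ← integral_const_mul]
    exact setIntegral_mono_on (hF_int y) ((hexp_int y).const_mul (m y)) measurableSet_Ioi
      (fun ξ hξ => mul_le_mul_of_nonneg_right (hmanti (le_of_lt hξ)) (Real.exp_pos _).le)
  -- the function P = e^γ F
  set P : ℝ → ℝ := fun y => Real.exp (γ y) * F y with hPdef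
  have hPc : Continuous P := (Real.continuous_exp.comp hγc).mul hFc
  have hPpos : ∀ y, 0 < P y := fun y => mul_pos (Real.exp_pos _) (hFpos y)
  have hP_int : ∀ a : ℝ, IntegrableOn P (Set.Ioi a) := by
    intro a
    refine Integrable.mono' ((hh_int a).const_mul (m a)) hPc.aestronglyMeasurable ?_
    refine (ae_restrict_iff' measurableSet_Ioi).mpr (ae_of_all _ fun y hy => ?_)
    rw [Real.norm_eq_abs, abs_of_pos (hPpos y)]
    have h1 : F y ≤ m y * G y := hFle y
    have h2 : m y ≤ m a := hmanti (le_of_lt hy)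
    have h3 : (0:ℝ) < Real.exp (γ y) := Real.exp_pos _
    have h4 : 0 < G y := hGpos y
    simp only [hPdef, hhdef]
    calc Real.exp (γ y) * F y ≤ Real.exp (γ y) * (m y * G y) :=
          mul_le_mul_of_nonneg_left h1 h3.le
      _ = m y * (Real.exp (γ y) * G y) := by ring
      _ ≤ m a * (Real.exp (γ y) * G y) := by
          apply mul_le_mul_of_nonneg_right h2
          positivity
  -- the function A
  set A : ℝ → ℝ := fun z => ∫ y in Set.Ioi z, P y with hAdef
  have hAd : ∀ z, HasDerivAt A (-(P z)) z := by
    intro z; rw [hAdef]; exact tail_hasDerivAt _ hPc hP_int z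
  have hA0 : Tendsto A atTop (nhds 0) := by
    rw [hAdef]; exact tail_tendsto _ hPc hP_int
  -- step 4 : 2 q e^γ G → 1
  have hqpos : ∀ᶠ z in atTop, 0 < q z := H2a.eventually_gt_atTop 0
  have hinv0 : Tendsto (fun z => (2 * q z)⁻¹) atTop (nhds 0) :=
    tendsto_inv_atTop_zero.comp (H2a.const_mul_atTop two_pos)
  have hexp0 : Tendsto (fun z => Real.exp (-(γ z))) atTop (nhds 0) :=
    Real.tendsto_exp_atBot.comp (tendsto_neg_atTop_atBot.comp hγtop)
  have hsmall : ∀ᶠ z in atTop, |deriv q z / q z ^ 2| < 1 := by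
    have := H2b.eventually (eventually_abs_sub_lt (0:ℝ) one_pos)
    simpa using this
  have hq1 : Tendsto (fun z => 2 * q z * (Real.exp (γ z) * G z)) atTop (nhds 1) := by
    have hgd : ∀ᶠ z in atTop, HasDerivAt (fun z => Real.exp (-(γ z)) / (2 * q z))
        ((Real.exp (-(γ z)) * (-(2 * q z)) * (2 * q z)
          - Real.exp (-(γ z)) * (2 * deriv q z)) / (2 * q z) ^ 2) z := by
      filter_upwards [hqpos] with z hz
      exact (((hγd z).neg).exp).div ((hqd z).const_mul 2) (by positivity)
    have hg'ne : ∀ᶠ z in atTop,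
        ((Real.exp (-(γ z)) * (-(2 * q z)) * (2 * q z)
          - Real.exp (-(γ z)) * (2 * deriv q z)) / (2 * q z) ^ 2) ≠ 0 := by
      filter_upwards [hqpos, hsmall] with z hz hs
      have hE := Real.exp_pos (-(γ z))
      have h1 := (abs_lt.mp hs).1
      have hq2pos : (0:ℝ) < q z ^ 2 := by positivity
      have h2 : -(q z ^ 2) < deriv q z := by
        have hx := mul_lt_mul_of_pos_right h1 hq2pos
        rw [div_mul_cancel₀ _ hq2pos.ne'] at hx
        linarith
      have h3 : 0 < 2 * q z ^ 2 + deriv q z := by nlinarith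
      apply ne_of_lt
      apply div_neg_of_neg_of_pos _ (by positivity)
      nlinarith [mul_pos hE h3]
    have hg0 : Tendsto (fun z => Real.exp (-(γ z)) / (2 * q z)) atTop (nhds 0) := by
      simpa [div_eq_mul_inv] using hexp0.mul hinv0
    have hratio : Tendsto (fun z => (-(Real.exp (-(γ z)))) /
        ((Real.exp (-(γ z)) * (-(2 * q z)) * (2 * q z)
          - Real.exp (-(γ z)) * (2 * deriv q z)) / (2 * q z) ^ 2)) atTop (nhds 1) := by
      have hlim : Tendsto (fun z => (1 + deriv q z / q z ^ 2 / 2)⁻¹) atTop (nhds 1) := by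
        have h0 : Tendsto (fun z => 1 + deriv q z / q z ^ 2 / 2) atTop (nhds (1 + 0 / 2)) :=
          tendsto_const_nhds.add (H2b.div_const 2)
        simpa using h0.inv₀ (by norm_num)
      apply Tendsto.congr' _ hlim
      filter_upwards [hqpos, hsmall] with z hz hs
      have hE := (Real.exp_pos (-(γ z))).ne'
      have hq2 : q z ≠ 0 := hz.ne'
      have h1 := (abs_lt.mp hs).1
      have h4 : (0:ℝ) < 1 + deriv q z / q z ^ 2 / 2 := by linarith
      have hq2pos : (0:ℝ) < q z ^ 2 := by positivity
      have h2 : -(q z ^ 2) < deriv q z := by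
        have hx := mul_lt_mul_of_pos_right h1 hq2pos
        rw [div_mul_cancel₀ _ hq2pos.ne'] at hx
        linarith
      have h3 : (2 * q z ^ 2 + deriv q z) ≠ 0 := by nlinarith
      set u := q z with hu'
      set E := Real.exp (-(γ z)) with hE'
      set b := deriv q z with hb'
      have hD : ((E*(-(2*u))*(2*u) - E*(2*b))/(2*u)^2) ≠ 0 := by
        have hden2 : E*(-(2*u))*(2*u) - E*(2*b) = (2*u^2+b) * (-(2*E)) := by ring
        rw [hden2]
        exact div_ne_zero (mul_ne_zero h3 (neg_ne_zero.mpr (mul_ne_zero two_ne_zero hE)))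
          (pow_ne_zero _ (mul_ne_zero two_ne_zero hq2))
      have h6 : (1 + b/u^2/2) = (2*u^2+b)/(2*u^2) := by
        field_simp
      rw [eq_div_iff hD, h6, inv_div, div_mul_div_comm,
        div_eq_iff (mul_ne_zero h3 (pow_ne_zero _ (mul_ne_zero two_ne_zero hq2)))]
      ring
    have hmain4 : Tendsto (fun z => G z / (Real.exp (-(γ z)) / (2 * q z))) atTop (nhds 1) :=
      HasDerivAt.lhopital_zero_atTop (Eventually.of_forall hGd) hgd hg'ne hG0 hg0 hratio
    apply Tendsto.congr' _ hmain4
    filter_upwards [hqpos] with z hz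
    rw [Real.exp_neg]
    have := Real.exp_ne_zero (γ z)
    field_simp
  -- e^γ G → 0
  have heG0 : Tendsto (fun z => Real.exp (γ z) * G z) atTop (nhds 0) := by
    have h1 := hq1.mul hinv0
    apply Tendsto.congr' _ (by simpa using h1)
    filter_upwards [hqpos] with z hz
    field_simp
  -- step 3 : (e^γ G)² / m → 0
  have hNlim : Tendsto (fun z => (Real.exp (γ z) * G z) ^ 2 / m z) atTop (nhds 0) := by
    have hfd : ∀ y, HasDerivAt (fun z => (Real.exp (γ z) * G z) ^ 2)
        ((2:ℕ) * (Real.exp (γ y) * G y) ^ 1 *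
          (Real.exp (γ y) * (2 * q y) * G y + Real.exp (γ y) * (-(Real.exp (-(γ y)))))) y :=
      fun y => (((hγd y).exp).mul (hGd y)).pow 2
    have hratio : Tendsto (fun y => ((2:ℕ) * (Real.exp (γ y) * G y) ^ 1 *
        (Real.exp (γ y) * (2 * q y) * G y + Real.exp (γ y) * (-(Real.exp (-(γ y))))))
          / (-(2 * hfun y))) atTop (nhds 0) := by
      have h1 : Tendsto (fun z => 1 - 2 * q z * (Real.exp (γ z) * G z)) atTop (nhds 0) := by
        have := (tendsto_const_nhds (x := (1:ℝ)) (f := atTop)).sub hq1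
        simpa using this
      apply Tendsto.congr' _ h1
      apply Eventually.of_forall
      intro z
      have hu := (Real.exp_pos (γ z)).ne'
      have hv := (hGpos z).ne'
      simp only [hhdef]
      rw [Real.exp_neg]
      field_simp
      ring
    have hf0 : Tendsto (fun z => (Real.exp (γ z) * G z) ^ 2) atTop (nhds 0) := by
      simpa using heG0.pow 2
    have hg'ne : ∀ᶠ z in atTop, -(2 * hfun z) ≠ 0 :=
      Eventually.of_forall fun z => by have := hhpos z; intro hc0; nlinarith [hc0]
    exact HasDerivAt.lhopital_zero_atTop (Eventually.of_forall hfd)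
      (Eventually.of_forall hmd) hg'ne hf0 hm0 hratio
  -- step 2 : F / (m G) → 1
  have hFmG : Tendsto (fun z => F z / (m z * G z)) atTop (nhds 1) := by
    have hgd : ∀ y, HasDerivAt (fun z => m z * G z)
        ((-(2 * hfun y)) * G y + m y * (-(Real.exp (-(γ y))))) y :=
      fun y => (hmd y).mul (hGd y)
    have hg'ne : ∀ᶠ y in atTop,
        ((-(2 * hfun y)) * G y + m y * (-(Real.exp (-(γ y))))) ≠ 0 := by
      apply Eventually.of_forall
      intro y
      have h1 := hhpos y; have h2 := hGpos y; have h3 := hmpos y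
      have h4 := Real.exp_pos (-(γ y))
      intro hc0
      nlinarith [hc0]
    have hratio : Tendsto (fun y => (-(m y * Real.exp (-(γ y)))) /
        ((-(2 * hfun y)) * G y + m y * (-(Real.exp (-(γ y)))))) atTop (nhds 1) := by
      have h1 : Tendsto (fun z => (1 + 2 * ((Real.exp (γ z) * G z) ^ 2 / m z))⁻¹)
          atTop (nhds 1) := by
        have h2 : Tendsto (fun z => 1 + 2 * ((Real.exp (γ z) * G z) ^ 2 / m z))
            atTop (nhds (1 + 2 * 0)) := tendsto_const_nhds.add (hNlim.const_mul 2)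
        simpa using h2.inv₀ (by norm_num)
      apply Tendsto.congr' _ h1
      apply Eventually.of_forall
      intro z
      have hu := (Real.exp_pos (γ z)).ne'
      have hv := (hGpos z).ne'
      have hmz := hmpos z
      simp only [hhdef]
      rw [Real.exp_neg]
      set u := Real.exp (γ z) with hu'
      set v := G z with hv'
      set M := m z with hM'
      have hpos : (0:ℝ) < 2*u^2*v^2 + M := by
        have h0 : (0:ℝ) ≤ 2*u^2*v^2 := by positivity
        linarith
      have h1 : (-(2*(u*v)))*v + M*(-(u⁻¹)) = -((2*u^2*v^2 + M) * u⁻¹) := by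
        field_simp
        ring
      rw [h1, div_neg, neg_div, neg_neg, mul_div_mul_right _ _ (inv_ne_zero hu),
        eq_div_iff hpos.ne']
      field_simp [hmz.ne']
      ring
    have hg0 : Tendsto (fun z => m z * G z) atTop (nhds 0) := by
      simpa using hm0.mul hG0
    exact HasDerivAt.lhopital_zero_atTop (Eventually.of_forall hFd)
      (Eventually.of_forall hgd) hg'ne hF0 hg0 hratio
  -- step 1 : 4 A / m² → 1
  have hmain : Tendsto (fun z => (4 * A z) / m z ^ 2) atTop (nhds 1) := by
    have hfd : ∀ y, HasDerivAt (fun z => 4 * A z) (4 * (-(P y))) y :=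
      fun y => (hAd y).const_mul 4
    have hgd : ∀ y, HasDerivAt (fun z => m z ^ 2) ((2:ℕ) * m y ^ 1 * (-(2 * hfun y))) y :=
      fun y => (hmd y).pow 2
    have hg'ne : ∀ᶠ y in atTop, ((2:ℕ) * m y ^ 1 * (-(2 * hfun y))) ≠ 0 := by
      apply Eventually.of_forall
      intro y
      have h1 := hhpos y; have h2 := hmpos y
      intro hc0
      push_cast at hc0
      nlinarith [hc0]
    have hf0 : Tendsto (fun z => 4 * A z) atTop (nhds 0) := by
      simpa using hA0.const_mul (4:ℝ)
    have hg0 : Tendsto (fun z => m z ^ 2) atTop (nhds 0) := by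
      simpa using hm0.pow 2
    have hratio : Tendsto (fun y => (4 * (-(P y))) / ((2:ℕ) * m y ^ 1 * (-(2 * hfun y))))
        atTop (nhds 1) := by
      apply Tendsto.congr' _ hFmG
      apply Eventually.of_forall
      intro y
      have hu := (Real.exp_pos (γ y)).ne'
      have hv := (hGpos y).ne'
      have hmy := (hmpos y).ne'
      simp only [hPdef, hhdef]
      push_cast
      rw [pow_one]
      rw [div_eq_div_iff (mul_ne_zero hmy hv) (mul_ne_zero (mul_ne_zero two_ne_zero hmy)
        (neg_ne_zero.mpr (mul_ne_zero two_ne_zero (mul_ne_zero hu hv))))]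
      ring
    exact HasDerivAt.lhopital_zero_atTop (Eventually.of_forall hfd)
      (Eventually.of_forall hgd) hg'ne hf0 hg0 hratio
  constructor
  · have h := hmain
    simp only [hAdef, hPdef, hFdef] at h
    exact h
  · have hsecond : Tendsto (fun z => (2 * m z ^ 2 - 4 * A z) / m z ^ 2) atTop (nhds 1) := by
      have h1 : Tendsto (fun z => 2 - (4 * A z) / m z ^ 2) atTop (nhds 1) := by
        have h2 := (tendsto_const_nhds (x := (2:ℝ)) (f := atTop)).sub hmain
        norm_num at h2
        exact h2
      apply Tendsto.congr' _ h1
      apply Eventually.of_forall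
      intro z
      have hmz := (hmpos z).ne'
      field_simp
    simp only [hAdef, hPdef, hFdef] at hsecond
    exact hsecond
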